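/- Let x be a type and let R ∈ Det(x) be a deterministic event of type x. Then the transpose Rᵀ (with respect to the fixed basis used in the Choi isomorphism) is also a deterministic event of type x; that is, R ∈ Det(x) ⟺ Rᵀ ∈ Det(x). -/

import Mathlib

open Matrix Kronecker
open scoped ComplexOrder

/-- Types of higher-order quantum theory. The trivial type `I` is `elem 1`. -/
inductive QT where
  | elem (n : ℕ)
  | arrow (x y : QT)

/-- The index type of the Hilbert space `H_x` associated to a type `x`. -/
def Idx : QT → Type
  | .elem n => Fin n
  | .arrow x y => Idx x × Idx y

instance idxFintype : (x : QT) → Fintype (Idx x)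
  | .elem n => inferInstanceAs (Fintype (Fin n))
  | .arrow x y =>
      letI := idxFintype x; letI := idxFintype y
      inferInstanceAs (Fintype (Idx x × Idx y))

instance idxDecEq : (x : QT) → DecidableEq (Idx x)
  | .elem n => inferInstanceAs (DecidableEq (Fin n))
  | .arrow x y =>
      letI := idxDecEq x; letI := idxDecEq y
      inferInstanceAs (DecidableEq (Idx x × Idx y))

/-- Partial trace over the first tensor factor. -/
noncomputable def ptrA {ι κ : Type} [Fintype ι]
    (M : Matrix (ι × κ) (ι × κ) ℂ) : Matrix κ κ ℂ :=
  fun k l => ∑ i : ι, M (i, k) (i, l)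

/-- Deterministic events of type `x`, defined recursively: for elementary types,
positive unit-trace operators; for `x → y`, positive operators `R` such that
`Tr_x[(Sᵀ ⊗ 1) R] ∈ Det y` for every `S ∈ Det x`. -/
noncomputable def Det : (x : QT) → Set (Matrix (Idx x) (Idx x) ℂ)
  | .elem n => {R | R.PosSemidef ∧ R.trace = 1}
  | .arrow x y =>
      setOf (fun (R : Matrix (Idx x × Idx y) (Idx x × Idx y) ℂ) =>
        R.PosSemidef ∧
        ∀ S ∈ Det x, ptrA ((Sᵀ ⊗ₖ (1 : Matrix (Idx y) (Idx y) ℂ)) * R) ∈ Det y)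

lemma ptrA_transpose_key {ι κ : Type} [Fintype ι] [Fintype κ] [DecidableEq κ]
    (S : Matrix ι ι ℂ) (R : Matrix (ι × κ) (ι × κ) ℂ) :
    ptrA ((Sᵀ ⊗ₖ (1 : Matrix κ κ ℂ)) * Rᵀ) =
      (ptrA ((Sᵀᵀ ⊗ₖ (1 : Matrix κ κ ℂ)) * R))ᵀ := by
  ext k l
  simp only [ptrA, Matrix.transpose_apply, Matrix.mul_apply, Matrix.kroneckerMap_apply,
    Matrix.one_apply, Fintype.sum_prod_type, mul_ite, mul_one, mul_zero, ite_mul, zero_mul,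
    Finset.sum_ite_eq, Finset.sum_ite_eq', Finset.mem_univ, if_true]
  rw [Finset.sum_comm]

lemma det_transpose_mp : ∀ (x : QT) (R : Matrix (Idx x) (Idx x) ℂ),
    R ∈ Det x → Rᵀ ∈ Det x
  | .elem n, R, ⟨h1, h2⟩ => ⟨h1.transpose, by rwa [Matrix.trace_transpose]⟩
  | .arrow x y, R, ⟨h1, h2⟩ => by
    refine ⟨h1.transpose, fun S hS => ?_⟩
    letI := idxFintype x; letI := idxDecEq y; letI := idxFintype y
    erw [ptrA_transpose_key]
    exact det_transpose_mp y _ (h2 Sᵀ (det_transpose_mp x S hS))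

/-- Transpose of a deterministic event: `R ∈ Det(x) ⟺ Rᵀ ∈ Det(x)`. -/
theorem det_transpose (x : QT) (R : Matrix (Idx x) (Idx x) ℂ) :
    R ∈ Det x ↔ Rᵀ ∈ Det x := by
  constructor
  · exact det_transpose_mp x R
  · intro h; simpa using det_transpose_mp x Rᵀ h
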